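/- Let φ be an N-function satisfying Assumption (φ ∈ C¹([0,∞)) ∩ C²((0,∞)) and φ'(t) ∼ t·φ''(t)). Define the shifted function φ_a for a ≥ 0 by φ_a(t) = ∫₀ᵗ φ'(a+s)·s/(a+s) ds. Then for t ≥ a one has φ_a(t) ∼ φ(t), and for 0 ≤ t ≤ a one has φ_a(t) ∼ t²·φ''(a), with constants independent of a and t. -/

import Mathlib

open MeasureTheory Real Filter

def IsNFunction (φ φ' : ℝ → ℝ) : Prop :=
  ConvexOn ℝ (Set.Ici 0) φ ∧
  φ 0 = 0 ∧ φ' 0 = 0 ∧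
  (∀ t : ℝ, 0 ≤ t → φ t = ∫ s in (0:ℝ)..t, φ' s) ∧
  (∀ t : ℝ, 0 ≤ t → ContinuousWithinAt φ' (Set.Ici t) t) ∧
  MonotoneOn φ' (Set.Ici 0) ∧
  (∀ t : ℝ, 0 < t → 0 < φ' t) ∧
  Tendsto φ' atTop atTop


/-- The Assumption: `φ` is an N-function of class `C¹([0,∞)) ∩ C²((0,∞))`,
with derivative `φ'` and second derivative `φ''`. -/
def SatisfiesAssumption (φ φ' φ'' : ℝ → ℝ) : Prop :=
  IsNFunction φ φ' ∧
  (∀ t : ℝ, 0 ≤ t → HasDerivWithinAt φ (φ' t) (Set.Ici 0) t) ∧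
  ContinuousOn φ' (Set.Ici 0) ∧
  (∀ t : ℝ, 0 < t → HasDerivAt φ' (φ'' t) t) ∧
  ContinuousOn φ'' (Set.Ioi 0)

/-- The shifted N-function `φ_a(t) = ∫₀ᵗ φ'(a+s)·s/(a+s) ds`. -/
noncomputable def shiftedPhi (φ' : ℝ → ℝ) (a t : ℝ) : ℝ :=
  ∫ s in (0:ℝ)..t, φ' (a + s) * s / (a + s)

/-- Doubling property of `φ'` from `d·t·φ''(t) ≤ φ'(t)`. -/
lemma phi'_doubling (φ' φ'' : ℝ → ℝ) (d : ℝ) (hd : 0 < d)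
    (hderiv : ∀ t : ℝ, 0 < t → HasDerivAt φ' (φ'' t) t)
    (hcont : ContinuousOn φ' (Set.Ici 0))
    (hlow : ∀ t : ℝ, 0 < t → d * (t * φ'' t) ≤ φ' t) :
    ∀ x : ℝ, 0 < x → φ' (2 * x) ≤ 2 ^ (1/d) * φ' x := by
  intro x hx
  set p := 1/d with hp
  have hp0 : 0 < p := by positivity
  have hF : ∀ z : ℝ, 0 < z → HasDerivAt (fun s => φ' s * s ^ (-p))
      ((z * φ'' z - p * φ' z) * z ^ (-p - 1)) z := by
    intro z hz
    have h1 : HasDerivAt (fun s : ℝ => s ^ (-p)) (-p * z ^ (-p - 1)) z :=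
      Real.hasDerivAt_rpow_const (Or.inl hz.ne')
    have := (hderiv z hz).mul h1
    refine this.congr_deriv ?_
    have hzp : z ^ (-p) = z * z ^ (-p - 1) := by
      rw [show (-p : ℝ) = (-p - 1) + 1 by ring, Real.rpow_add_one hz.ne']
      ring
    rw [hzp]; ring
  have hanti : AntitoneOn (fun s => φ' s * s ^ (-p)) (Set.Ioi 0) := by
    apply antitoneOn_of_deriv_nonpos (convex_Ioi 0)
    · apply ContinuousOn.mul
      · exact hcont.mono (Set.Ioi_subset_Ici le_rfl)
      · intro z hz
        exact (Real.continuousAt_rpow_const z (-p) (Or.inl (ne_of_gt hz))).continuousWithinAt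
    · intro z hz
      rw [interior_Ioi] at hz
      exact (hF z hz).differentiableAt.differentiableWithinAt
    · intro z hz
      rw [interior_Ioi] at hz
      rw [(hF z hz).deriv]
      have h1 : z * φ'' z - p * φ' z ≤ 0 := by
        have h2 := hlow z hz
        have : z * φ'' z ≤ p * φ' z := by
          rw [hp]; rw [div_mul_eq_mul_div, le_div_iff₀ hd]; nlinarith
        linarith
      have h2 : (0:ℝ) ≤ z ^ (-p - 1) := Real.rpow_nonneg hz.le _
      exact mul_nonpos_of_nonpos_of_nonneg h1 h2
  have h2x : (0:ℝ) < 2 * x := by linarith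
  have key := hanti (Set.mem_Ioi.2 hx) (Set.mem_Ioi.2 h2x) (by linarith)
  simp only at key
  have hxp : (0:ℝ) < x ^ p := Real.rpow_pos_of_pos hx p
  have h2xp : (2 * x) ^ p = 2 ^ p * x ^ p := Real.mul_rpow (by norm_num) hx.le
  rw [Real.rpow_neg h2x.le, Real.rpow_neg hx.le, h2xp] at key
  have h2p : (0:ℝ) < (2:ℝ) ^ p := Real.rpow_pos_of_pos (by norm_num) p
  rw [← div_eq_mul_inv, ← div_eq_mul_inv, div_le_div_iff₀ (by positivity) hxp] at key
  nlinarith [key, hxp]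

set_option maxHeartbeats 2000000 in
/-- Under the Assumption: `φ_a(t) ∼ φ(t)` for `t ≥ a`, and `φ_a(t) ∼ t²·φ''(a)` for
`0 ≤ t ≤ a`, with constants independent of `a` and `t`. -/
theorem shifted_equiv (φ φ' φ'' : ℝ → ℝ) (hA : SatisfiesAssumption φ φ' φ'')
    (d d' : ℝ) (hd : 0 < d) (hd' : 0 < d')
    (hequiv : ∀ t : ℝ, 0 < t → d * (t * φ'' t) ≤ φ' t ∧ φ' t ≤ d' * (t * φ'' t)) :
    ∃ c₁ c₂ : ℝ, 0 < c₁ ∧ 0 < c₂ ∧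
      ∀ a : ℝ, 0 ≤ a →
        (∀ t : ℝ, a ≤ t → c₁ * φ t ≤ shiftedPhi φ' a t ∧ shiftedPhi φ' a t ≤ c₂ * φ t) ∧
        (∀ t : ℝ, 0 ≤ t → t ≤ a →
          c₁ * (t ^ 2 * φ'' a) ≤ shiftedPhi φ' a t ∧
          shiftedPhi φ' a t ≤ c₂ * (t ^ 2 * φ'' a)) := by
  obtain ⟨hN, hD1, hφ'cont, hφ''deriv, hφ''cont⟩ := hA
  obtain ⟨hconv, hφ0, hφ'0, hFTC, hφ'rc, hφ'mono, hφ'pos, hφ'top⟩ := hN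
  set K : ℝ := 2 ^ (1/d) with hKdef
  have hK1 : (1:ℝ) ≤ K := Real.one_le_rpow (by norm_num) (by positivity)
  have hKpos : (0:ℝ) < K := by linarith
  have hdbl : ∀ x : ℝ, 0 < x → φ' (2 * x) ≤ K * φ' x :=
    phi'_doubling φ' φ'' d hd hφ''deriv hφ'cont (fun t ht => (hequiv t ht).1)
  -- φ' is nonnegative on [0,∞)
  have hφ'nn : ∀ t : ℝ, 0 ≤ t → 0 ≤ φ' t := by
    intro t ht
    rcases eq_or_lt_of_le ht with h | h
    · rw [← h, hφ'0]
    · exact (hφ'pos t h).le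
  -- integrability of φ' on subintervals of [0,∞)
  have hφ'int : ∀ u v : ℝ, 0 ≤ u → u ≤ v → IntervalIntegrable φ' volume u v := by
    intro u v hu huv
    apply ContinuousOn.intervalIntegrable
    apply hφ'cont.mono
    rw [Set.uIcc_of_le huv]
    exact fun z hz => le_trans hu hz.1 |>.trans_eq rfl
  -- the integrand
  set g : ℝ → ℝ → ℝ := fun a s => φ' (a + s) * s / (a + s) with hgdef
  -- continuity of integrand for a > 0
  have hgcont : ∀ a : ℝ, 0 < a → ContinuousOn (g a) (Set.Ici 0) := by
    intro a ha
    apply ContinuousOn.div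
    · apply ContinuousOn.mul ?_ continuousOn_id
      apply hφ'cont.comp (continuous_const.add continuous_id).continuousOn
      intro s hs
      simp only [Set.mem_Ici] at *
      exact Set.mem_Ici.2 (by simpa using add_nonneg ha.le hs)
    · exact (continuous_const.add continuous_id).continuousOn
    · intro s hs
      have : (0:ℝ) < a + s := by simp only [Set.mem_Ici] at hs; linarith
      exact this.ne'
  have hgint : ∀ a t : ℝ, 0 < a → 0 ≤ t → IntervalIntegrable (g a) volume 0 t := by
    intro a t ha ht
    apply ContinuousOn.intervalIntegrable
    apply (hgcont a ha).mono
    rw [Set.uIcc_of_le ht]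
    exact fun z hz => hz.1
  have hgint' : ∀ a u v : ℝ, 0 < a → 0 ≤ u → u ≤ v → IntervalIntegrable (g a) volume u v := by
    intro a u v ha hu huv
    apply ContinuousOn.intervalIntegrable
    apply (hgcont a ha).mono
    rw [Set.uIcc_of_le huv]
    exact fun z hz => le_trans hu hz.1
  -- nonnegativity of g
  have hgnn : ∀ a s : ℝ, 0 ≤ a → 0 ≤ s → 0 ≤ g a s := by
    intro a s ha hs
    apply div_nonneg (mul_nonneg (hφ'nn _ (by linarith)) hs) (by linarith)
  -- φ(t) ≥ 0
  have hφnn : ∀ t : ℝ, 0 ≤ t → 0 ≤ φ t := by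
    intro t ht
    rw [hFTC t ht]
    apply intervalIntegral.integral_nonneg ht
    intro u hu; exact hφ'nn u hu.1
  -- φ(t) ≤ t φ'(t)
  have hφub : ∀ t : ℝ, 0 ≤ t → φ t ≤ t * φ' t := by
    intro t ht
    rw [hFTC t ht]
    calc (∫ s in (0:ℝ)..t, φ' s) ≤ ∫ _ in (0:ℝ)..t, φ' t := by
          apply intervalIntegral.integral_mono_on ht (hφ'int 0 t le_rfl ht)
            intervalIntegrable_const
          intro u hu; exact hφ'mono hu.1 (le_trans hu.1 hu.2) hu.2
      _ = t * φ' t := by simp [smul_eq_mul]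
  -- (t/2) φ'(t/2) ≤ φ(t)
  have hφlb : ∀ t : ℝ, 0 < t → (t/2) * φ' (t/2) ≤ φ t := by
    intro t ht
    have ht2 : (0:ℝ) ≤ t/2 := by linarith
    have h12 : t/2 ≤ t := by linarith
    rw [hFTC t ht.le]
    rw [← intervalIntegral.integral_add_adjacent_intervals (hφ'int 0 (t/2) le_rfl ht2)
      (hφ'int (t/2) t ht2 h12)]
    have h1 : (0:ℝ) ≤ ∫ s in (0:ℝ)..(t/2), φ' s :=
      intervalIntegral.integral_nonneg ht2 (fun u hu => hφ'nn u hu.1)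
    have h2 : (t/2) * φ' (t/2) ≤ ∫ s in (t/2)..t, φ' s := by
      calc (t/2) * φ' (t/2) = ∫ _ in (t/2)..t, φ' (t/2) := by
            rw [intervalIntegral.integral_const, smul_eq_mul]; ring
        _ ≤ ∫ s in (t/2)..t, φ' s := by
            apply intervalIntegral.integral_mono_on h12 intervalIntegrable_const
              (hφ'int (t/2) t ht2 h12)
            intro u hu; exact hφ'mono ht2 (le_trans ht2 hu.1) hu.1
    linarith
  -- choose constants
  refine ⟨min (1/(6*K)) (d/4), max (2*K^2) (K*d'/2), by positivity, by positivity, ?_⟩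
  have hc₁le1 : min (1/(6*K)) (d/4) ≤ 1 := by
    have : 1/(6*K) ≤ 1 := by
      rw [div_le_one (by positivity)]; linarith
    exact le_trans (min_le_left _ _) this
  have hc₂ge1 : (1:ℝ) ≤ max (2*K^2) (K*d'/2) := by
    have : (1:ℝ) ≤ 2*K^2 := by nlinarith
    exact le_trans this (le_max_left _ _)
  intro a ha
  constructor
  · -- Part 1 : a ≤ t
    intro t hat
    have ht : 0 ≤ t := le_trans ha hat
    rcases eq_or_lt_of_le ht with h0 | ht'
    · -- t = 0, so a = 0
      have ha0 : a = 0 := le_antisymm (by linarith) ha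
      have : shiftedPhi φ' a t = 0 := by
        rw [← h0, shiftedPhi, intervalIntegral.integral_same]
      rw [this, ← h0, hφ0]
      constructor <;> simp
    · -- 0 < t
      rcases eq_or_lt_of_le ha with ha0 | ha'
      · -- a = 0 : shiftedPhi = φ
        have heq : shiftedPhi φ' a t = φ t := by
          rw [shiftedPhi, hFTC t ht]
          apply intervalIntegral.integral_congr
          intro s hs
          simp only [← ha0, zero_add]
          rcases eq_or_ne s 0 with h | h
          · simp [h, hφ'0]
          · rw [mul_div_assoc, div_self h, mul_one]
        rw [heq]
        have := hφnn t ht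
        constructor
        · nlinarith
        · nlinarith
      · -- 0 < a ≤ t
        have h2t : (0:ℝ) < 2*t := by linarith
        have ht2 : (0:ℝ) < t/2 := by linarith
        -- upper bound
        have hub : shiftedPhi φ' a t ≤ t * φ' (2*t) := by
          rw [shiftedPhi]
          calc (∫ s in (0:ℝ)..t, φ' (a+s) * s / (a+s))
              ≤ ∫ _ in (0:ℝ)..t, φ' (2*t) := by
                apply intervalIntegral.integral_mono_on ht (hgint a t ha' ht)
                  intervalIntegrable_const
                intro s hs
                have has : (0:ℝ) < a + s := by linarith [hs.1]
                have h1 : s/(a+s) ≤ 1 := by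
                  rw [div_le_one has]; linarith [hs.1]
                have h2 : φ' (a+s) ≤ φ' (2*t) := by
                  apply hφ'mono (by linarith [hs.1] : (0:ℝ) ≤ a+s) h2t.le
                  linarith [hs.2]
                show φ' (a+s) * s / (a+s) ≤ φ' (2*t)
                rw [mul_div_assoc]
                calc φ' (a+s) * (s/(a+s)) ≤ φ' (2*t) * 1 :=
                    mul_le_mul h2 h1 (div_nonneg hs.1 has.le) (hφ'nn _ h2t.le)
                  _ = φ' (2*t) := mul_one _
            _ = t * φ' (2*t) := by simp [smul_eq_mul]
        -- lower bound
        have hlb : (t/2) * (φ' (t/2) * (1/3)) ≤ shiftedPhi φ' a t := by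
          rw [shiftedPhi]
          rw [← intervalIntegral.integral_add_adjacent_intervals
            (hgint' a 0 (t/2) ha' le_rfl ht2.le) (hgint' a (t/2) t ha' ht2.le (by linarith))]
          have h1 : (0:ℝ) ≤ ∫ s in (0:ℝ)..(t/2), g a s :=
            intervalIntegral.integral_nonneg ht2.le (fun u hu => hgnn a u ha hu.1)
          have h2 : (t/2) * (φ' (t/2) * (1/3)) ≤ ∫ s in (t/2)..t, g a s := by
            calc (t/2) * (φ' (t/2) * (1/3)) = ∫ _ in (t/2)..t, φ' (t/2) * (1/3) := by
                  simp [smul_eq_mul]; ring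
              _ ≤ ∫ s in (t/2)..t, g a s := by
                  apply intervalIntegral.integral_mono_on (by linarith)
                    intervalIntegrable_const (hgint' a (t/2) t ha' ht2.le (by linarith))
                  intro s hs
                  have hs0 : (0:ℝ) < s := lt_of_lt_of_le ht2 hs.1
                  have has : (0:ℝ) < a + s := by linarith
                  have h3 : φ' (t/2) ≤ φ' (a+s) := by
                    apply hφ'mono ht2.le (by linarith : (0:ℝ) ≤ a+s)
                    linarith [hs.1]
                  have h4 : (1:ℝ)/3 ≤ s/(a+s) := by
                    rw [div_le_div_iff₀ (by norm_num) has]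
                    have : a ≤ t := hat
                    linarith [hs.1, hs.2]
                  show φ' (t/2) * (1/3) ≤ φ' (a+s) * s / (a+s)
                  rw [mul_div_assoc]
                  exact mul_le_mul h3 h4 (by norm_num) (hφ'nn _ (by linarith))
          linarith
        -- combine
        have hdbl1 : φ' (2*t) ≤ K * φ' t := hdbl t ht'
        have hdbl2 : φ' t ≤ K * φ' (t/2) := by
          have := hdbl (t/2) ht2
          rw [show 2*(t/2) = t by ring] at this
          exact this
        have hub2 := hφub t ht
        have hlb2 := hφlb t ht'
        have hφ'nnt2 := hφ'nn (t/2) ht2.le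
        have hφ'nnt := hφ'nn t ht
        have hφt := hφnn t ht
        constructor
        · -- c₁ φ t ≤ shiftedPhi
          have h5 : φ t ≤ t * (K * φ' (t/2)) := by nlinarith
          have h6 : min (1/(6*K)) (d/4) * φ t ≤ (1/(6*K)) * φ t :=
            mul_le_mul_of_nonneg_right (min_le_left _ _) hφt
          have h7 : (1/(6*K)) * φ t ≤ (t/2) * (φ' (t/2) * (1/3)) := by
            rw [div_mul_eq_mul_div, div_le_iff₀ (by positivity)]
            nlinarith
          linarith
        · -- shiftedPhi ≤ c₂ φ t
          have e1 : t * φ' (2*t) ≤ t * (K * φ' t) := mul_le_mul_of_nonneg_left hdbl1 ht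
          have e2 : K * (t * φ' t) ≤ K * (t * (K * φ' (t/2))) :=
            mul_le_mul_of_nonneg_left (mul_le_mul_of_nonneg_left hdbl2 ht) hKpos.le
          have e3 : t * φ' (t/2) ≤ 2 * φ t := by linarith
          have e4 : (K*K) * (t * φ' (t/2)) ≤ (K*K) * (2 * φ t) :=
            mul_le_mul_of_nonneg_left e3 (by positivity)
          have h5 : t * φ' (2*t) ≤ 2*K^2 * φ t := by nlinarith [e1, e2, e4]
          have h6 : 2*K^2 * φ t ≤ max (2*K^2) (K*d'/2) * φ t :=
            mul_le_mul_of_nonneg_right (le_max_left _ _) hφt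
          linarith
  · -- Part 2 : 0 ≤ t ≤ a
    intro t ht hta
    rcases eq_or_lt_of_le ht with h0 | ht'
    · have : shiftedPhi φ' a t = 0 := by
        rw [← h0, shiftedPhi, intervalIntegral.integral_same]
      rw [this, ← h0]
      norm_num
    · have ha' : 0 < a := lt_of_lt_of_le ht' hta
      have ha2 : (0:ℝ) < 2*a := by linarith
      have hφ''a : 0 < φ'' a := by
        have h1 := (hequiv a ha').2
        have h2 := hφ'pos a ha'
        by_contra hcon
        push_neg at hcon
        have hx : 0 ≤ d' * (a * (-φ'' a)) :=
          mul_nonneg hd'.le (mul_nonneg ha'.le (by linarith))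
        nlinarith [hx]
      have heq1 := (hequiv a ha').1
      have heq2 := (hequiv a ha').2
      have hφ'a := hφ'pos a ha'
      -- lower bound
      have hlb : (φ' a/(2*a)) * (t^2/2) ≤ shiftedPhi φ' a t := by
        rw [shiftedPhi]
        calc (φ' a/(2*a)) * (t^2/2) = ∫ s in (0:ℝ)..t, (φ' a/(2*a)) * s := by
              rw [intervalIntegral.integral_const_mul, integral_id]
              norm_num
          _ ≤ ∫ s in (0:ℝ)..t, φ' (a+s) * s / (a+s) := by
              apply intervalIntegral.integral_mono_on ht
                (Continuous.intervalIntegrable (continuous_const.mul continuous_id) 0 t) (hgint a t ha' ht)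
              intro s hs
              have has : (0:ℝ) < a + s := by linarith [hs.1]
              have h3 : φ' a ≤ φ' (a+s) :=
                hφ'mono ha'.le (by linarith [hs.1] : (0:ℝ) ≤ a+s) (by linarith [hs.1])
              show (φ' a/(2*a)) * s ≤ φ' (a+s) * s / (a+s)
              rw [div_mul_eq_mul_div]
              apply div_le_div₀ (mul_nonneg (hφ'nn _ (by linarith)) hs.1)
                (mul_le_mul_of_nonneg_right h3 hs.1) has
              linarith [hs.2]
      -- upper bound
      have hub : shiftedPhi φ' a t ≤ (φ' (2*a)/a) * (t^2/2) := by
        rw [shiftedPhi]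
        calc (∫ s in (0:ℝ)..t, φ' (a+s) * s / (a+s))
            ≤ ∫ s in (0:ℝ)..t, (φ' (2*a)/a) * s := by
              apply intervalIntegral.integral_mono_on ht (hgint a t ha' ht)
                (Continuous.intervalIntegrable (continuous_const.mul continuous_id) 0 t)
              intro s hs
              have has : (0:ℝ) < a + s := by linarith [hs.1]
              have h3 : φ' (a+s) ≤ φ' (2*a) := by
                apply hφ'mono (by linarith [hs.1] : (0:ℝ) ≤ a+s) ha2.le
                linarith [hs.2]
              show φ' (a+s) * s / (a+s) ≤ (φ' (2*a)/a) * s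
              rw [div_mul_eq_mul_div]
              apply div_le_div₀ (mul_nonneg (hφ'nn _ ha2.le) hs.1)
                (mul_le_mul_of_nonneg_right h3 hs.1) ha'
              linarith [hs.1]
          _ = (φ' (2*a)/a) * (t^2/2) := by
              rw [intervalIntegral.integral_const_mul, integral_id]
              norm_num
      have hdbla : φ' (2*a) ≤ K * φ' a := hdbl a ha'
      have ht2 : (0:ℝ) ≤ t^2 := sq_nonneg t
      constructor
      · have h6 : min (1/(6*K)) (d/4) * (t^2 * φ'' a) ≤ (d/4) * (t^2 * φ'' a) :=
          mul_le_mul_of_nonneg_right (min_le_right _ _) (by positivity)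
        have h7 : (d/4) * (t^2 * φ'' a) ≤ (φ' a/(2*a)) * (t^2/2) := by
          rw [div_mul_eq_mul_div, div_mul_eq_mul_div, div_le_div_iff₀ (by norm_num) (by positivity)]
          nlinarith
        linarith
      · have h6 : (K*d'/2) * (t^2 * φ'' a) ≤ max (2*K^2) (K*d'/2) * (t^2 * φ'' a) :=
          mul_le_mul_of_nonneg_right (le_max_right _ _) (by positivity)
        have h7 : (φ' (2*a)/a) * (t^2/2) ≤ (K*d'/2) * (t^2 * φ'' a) := by
          rw [div_mul_eq_mul_div, div_mul_eq_mul_div, div_le_iff₀ ha']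
          have e1 : φ' (2*a) * t^2 ≤ (K * φ' a) * t^2 := mul_le_mul_of_nonneg_right hdbla ht2
          have e2 : (K * φ' a) * t^2 ≤ (K * (d' * (a * φ'' a))) * t^2 :=
            mul_le_mul_of_nonneg_right (mul_le_mul_of_nonneg_left heq2 hKpos.le) ht2
          nlinarith [e1, e2]
        linarith
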